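/- For every concave modulus of continuity ω satisfying the Dini condition ∫₀^ε ω(t)/t dt < ∞ for some ε > 0, and every 2π-periodic function f with modulus of continuity bounded by ω, the conjugate function f̃(x) = -(1/π) p.v.∫_{-π}^{π} f(t)/(2 tan((t-x)/2)) dt exists at every point x (the principal value integral converges). -/

import Mathlib

open MeasureTheory Real Filter Set
open Topology

noncomputable section

/-- ω is a concave modulus of continuity. -/
def IsConcaveModulus (ω : ℝ → ℝ) : Prop :=
  Continuous ω ∧ MonotoneOn ω (Ici 0) ∧ ω 0 = 0 ∧
    (∀ s t : ℝ, 0 ≤ s → 0 ≤ t → ω (s + t) ≤ ω s + ω t) ∧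
    (∀ t : ℝ, 0 ≤ t → 0 ≤ ω t) ∧ ConcaveOn ℝ (Ici 0) ω

/-- The Dini condition: ∫₀^ε ω(t)/t dt < ∞ for some ε > 0. -/
def DiniCondition (ω : ℝ → ℝ) : Prop :=
  ∃ ε > 0, IntegrableOn (fun t => ω t / t) (Ioo 0 ε)

/-- f is 2π-periodic with modulus of continuity bounded by ω. -/
def MemH (ω f : ℝ → ℝ) : Prop :=
  Function.Periodic f (2 * π) ∧ ∀ x y : ℝ, |f x - f y| ≤ ω |x - y|

/-- The principal value integral defining the conjugate function converges to L at x. -/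
def ConjAt (f : ℝ → ℝ) (x L : ℝ) : Prop :=
  Tendsto (fun δ : ℝ =>
      -(1 / π) * ∫ t in {t : ℝ | δ ≤ |t - x| ∧ |t - x| ≤ π},
        f t / (2 * Real.tan ((t - x) / 2)))
    (nhdsWithin 0 (Ioi 0)) (nhds L)

/-- g is the trigonometric conjugate of f. -/
def ConjFn (f g : ℝ → ℝ) : Prop := ∀ x : ℝ, ConjAt f x (g x)

/-- f belongs to W^r H_ω. -/
def MemWrH (r : ℕ) (ω f : ℝ → ℝ) : Prop :=
  Function.Periodic f (2 * π) ∧ ContDiff ℝ r f ∧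
    ∀ x y : ℝ, |iteratedDeriv r f x - iteratedDeriv r f y| ≤ ω |x - y|

lemma aux_denom {δ s : ℝ} (hδ : 0 < δ) (h1 : δ ≤ |s|) (h2 : |s| < π) :
    δ ≤ |2 * Real.tan (s / 2)| := by
  have hpi := Real.pi_pos
  rcases le_or_gt 0 s with hs | hs
  · rw [abs_of_nonneg hs] at h1 h2
    have ht := Real.le_tan (x := s/2) (by linarith) (by linarith)
    rw [abs_of_nonneg (by linarith)]
    linarith
  · rw [abs_of_neg hs] at h1 h2
    have ht := Real.le_tan (x := -s/2) (by linarith) (by linarith)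
    have : Real.tan (s/2) = - Real.tan (-s/2) := by
      rw [← Real.tan_neg]; ring_nf
    rw [this, abs_of_nonpos (by nlinarith)]
    linarith

lemma aux_tan_zero {s : ℝ} (h : |s| = π) : Real.tan (s / 2) = 0 := by
  rcases (abs_eq Real.pi_pos.le).1 h with h | h <;> rw [h]
  · exact Real.tan_pi_div_two
  · rw [neg_div, Real.tan_neg, Real.tan_pi_div_two, neg_zero]

lemma aux_div_bound {M δ : ℝ} (hδ : 0 < δ) (hM : 0 ≤ M) {c s : ℝ} (hc : |c| ≤ M)
    (h1 : δ ≤ |s|) (h2 : |s| ≤ π) : |c / (2 * Real.tan (s / 2))| ≤ M / δ := by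
  rcases lt_or_eq_of_le h2 with h2 | h2
  · have hd := aux_denom hδ h1 h2
    rw [abs_div]
    exact div_le_div₀ hM hc hδ hd
  · rw [aux_tan_zero h2]
    simp
    positivity

/-- existence of the conjugate function at every point. -/
theorem conj_exists (ω f : ℝ → ℝ) (hω : IsConcaveModulus ω) (hd : DiniCondition ω)
    (hf : MemH ω f) : ∀ x : ℝ, ∃ L : ℝ, ConjAt f x L := by
  obtain ⟨hωc, hωmono, hω0, hωsub, hωnn, -⟩ := hω
  obtain ⟨hper, hfω⟩ := hf
  obtain ⟨ε, hε, hεint⟩ := hd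
  intro x
  have hπ := Real.pi_pos
  -- continuity of f
  have hfc : Continuous f := by
    rw [continuous_iff_continuousAt]
    intro a
    rw [ContinuousAt, tendsto_iff_dist_tendsto_zero]
    have h2 : Tendsto (fun y : ℝ => |y - a|) (𝓝 a) (𝓝 0) := by
      have := ((continuous_id.sub (continuous_const (y := a))).abs).tendsto a
      simpa using this
    have h1 : Tendsto (fun y => ω |y - a|) (𝓝 a) (𝓝 0) := by
      have := (hωc.tendsto 0).comp h2
      rwa [hω0] at this
    refine squeeze_zero (fun y => dist_nonneg) (fun y => ?_) h1
    rw [Real.dist_eq]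
    exact hfω y a
  set M := |f x| + ω π with hM_def
  have hωπ : 0 ≤ ω π := hωnn π hπ.le
  have hM0 : 0 ≤ M := by positivity
  have hMb : ∀ t : ℝ, |t - x| ≤ π → |f t| ≤ M := by
    intro t ht
    have h1 : |f t - f x| ≤ ω |t - x| := hfω t x
    have h2 : ω |t - x| ≤ ω π := hωmono (mem_Ici.2 (abs_nonneg _)) hπ.le ht
    calc |f t| = |f x + (f t - f x)| := by ring_nf
    _ ≤ |f x| + |f t - f x| := abs_add_le _ _
    _ ≤ M := by rw [hM_def]; linarith
  -- measurability
  have htan : Measurable Real.tan := by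
    have : Real.tan = fun y => Real.sin y / Real.cos y :=
      funext fun y => Real.tan_eq_sin_div_cos y
    rw [this]; exact Real.measurable_sin.div Real.measurable_cos
  have hgmeas : Measurable (fun t : ℝ => f t / (2 * Real.tan ((t - x) / 2))) :=
    hfc.measurable.div ((htan.comp ((measurable_id.sub_const x).div_const 2)).const_mul 2)
  set φ : ℝ → ℝ := fun u => (f (x + u) - f (x - u)) / (2 * Real.tan (u / 2)) with hφ_def
  have hφm : Measurable φ := by
    exact ((hfc.comp (continuous_const.add continuous_id)).sub
      (hfc.comp (continuous_const.sub continuous_id))).measurable.div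
      ((htan.comp (measurable_id.div_const 2)).const_mul 2)
  set ψ : ℝ → ℝ := fun u => 2 * (ω u / u) with hψ_def
  have hψint : IntegrableOn ψ (Ioc 0 π) := by
    set ε' := min ε π with hε'def
    have hε'0 : 0 < ε' := lt_min hε hπ
    have h1 : IntegrableOn (fun t => ω t / t) (Ioo 0 ε') :=
      hεint.mono_set (Ioo_subset_Ioo_right (min_le_left _ _))
    have h2 : IntegrableOn (fun t => ω t / t) (Icc ε' π) := by
      apply ContinuousOn.integrableOn_Icc
      exact hωc.continuousOn.div continuousOn_id
        (fun t ht => ne_of_gt (lt_of_lt_of_le hε'0 ht.1))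
    have h3 : IntegrableOn (fun t => ω t / t) (Ioc 0 π) := by
      refine (h1.union h2).mono_set ?_
      intro u hu
      rcases lt_or_ge u ε' with h | h
      · exact Or.inl ⟨hu.1, h⟩
      · exact Or.inr ⟨h, hu.2⟩
    exact h3.const_mul 2
  have hψnn : ∀ u ∈ Ioc (0:ℝ) π, 0 ≤ ψ u := fun u hu =>
    mul_nonneg (by norm_num) (div_nonneg (hωnn u hu.1.le) hu.1.le)
  have hφψ : ∀ u ∈ Ioc (0:ℝ) π, ‖φ u‖ ≤ ψ u := by
    intro u hu
    have hωu := hωnn u hu.1.le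
    rcases lt_or_eq_of_le hu.2 with h2 | h2
    · have hd : u ≤ 2 * Real.tan (u / 2) := by
        have := Real.le_tan (x := u/2) (by linarith [hu.1]) (by linarith)
        linarith
      have hnum : |f (x + u) - f (x - u)| ≤ 2 * ω u := by
        have h1 : |f (x + u) - f (x - u)| ≤ ω |(x + u) - (x - u)| := hfω _ _
        have h2' : |(x + u) - (x - u)| = u + u := by
          rw [show (x + u) - (x - u) = u + u by ring, abs_of_nonneg (by linarith [hu.1])]
        rw [h2'] at h1
        have := hωsub u u hu.1.le hu.1.le
        linarith
      simp only [hφ_def, hψ_def, Real.norm_eq_abs]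
      rw [abs_div, abs_of_nonneg (by linarith [hu.1] : (0:ℝ) ≤ 2 * Real.tan (u/2))]
      calc |f (x + u) - f (x - u)| / (2 * Real.tan (u / 2)) ≤ (2 * ω u) / u :=
            div_le_div₀ (by linarith) hnum hu.1 hd
        _ = ψ u := by rw [hψ_def]; ring
    · subst h2
      simp only [hφ_def, hψ_def, Real.tan_pi_div_two, mul_zero, div_zero, norm_zero]
      exact mul_nonneg (by norm_num) (div_nonneg hωu hπ.le)
  have hφint : IntegrableOn φ (Ioc 0 π) := by
    refine hψint.mono' hφm.aestronglyMeasurable.restrict ?_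
    rw [ae_restrict_iff' measurableSet_Ioc]
    exact Eventually.of_forall hφψ
  -- key change of variables
  have key : ∀ δ : ℝ, δ ∈ Ioo 0 π →
      (∫ t in {t : ℝ | δ ≤ |t - x| ∧ |t - x| ≤ π}, f t / (2 * Real.tan ((t - x) / 2)))
        = ∫ u in Ioc δ π, φ u := by
    rintro δ ⟨hδ0, hδπ⟩
    have hgb : ∀ t : ℝ, δ ≤ |t - x| → |t - x| ≤ π →
        ‖f t / (2 * Real.tan ((t - x) / 2))‖ ≤ M / δ := by
      intro t h1 h2
      rw [Real.norm_eq_abs]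
      exact aux_div_bound hδ0 hM0 (hMb t h2) h1 h2
    have hset : {t : ℝ | δ ≤ |t - x| ∧ |t - x| ≤ π}
        = Icc (x - π) (x - δ) ∪ Icc (x + δ) (x + π) := by
      ext t
      simp only [mem_setOf_eq, mem_union, mem_Icc, le_abs, abs_le]
      constructor
      · rintro ⟨h1 | h1, h2, h3⟩
        · right; constructor <;> linarith
        · left; constructor <;> linarith
      · rintro (⟨h1, h2⟩ | ⟨h1, h2⟩)
        · exact ⟨Or.inr (by linarith), by linarith, by linarith⟩
        · exact ⟨Or.inl (by linarith), by linarith, by linarith⟩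
    have hint_r : IntegrableOn (fun t => f t / (2 * Real.tan ((t - x) / 2)))
        (Icc (x + δ) (x + π)) := by
      apply Measure.integrableOn_of_bounded (M := M / δ) (measure_Icc_lt_top).ne
        hgmeas.aestronglyMeasurable
      rw [ae_restrict_iff' measurableSet_Icc]
      refine Eventually.of_forall fun t ht => ?_
      have h1 : δ ≤ |t - x| := le_trans (by linarith [ht.1]) (le_abs_self _)
      have h2 : |t - x| ≤ π := abs_le.2 ⟨by linarith [ht.1], by linarith [ht.2]⟩
      exact hgb t h1 h2
    have hint_l : IntegrableOn (fun t => f t / (2 * Real.tan ((t - x) / 2)))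
        (Icc (x - π) (x - δ)) := by
      apply Measure.integrableOn_of_bounded (M := M / δ) (measure_Icc_lt_top).ne
        hgmeas.aestronglyMeasurable
      rw [ae_restrict_iff' measurableSet_Icc]
      refine Eventually.of_forall fun t ht => ?_
      have h1 : δ ≤ |t - x| := le_trans (by linarith [ht.2]) (neg_le_abs _)
      have h2 : |t - x| ≤ π := abs_le.2 ⟨by linarith [ht.1], by linarith [ht.2]⟩
      exact hgb t h1 h2
    have hdisj : Disjoint (Icc (x - π) (x - δ)) (Icc (x + δ) (x + π)) := by
      apply Set.disjoint_left.2
      rintro t ⟨-, h2⟩ ⟨h3, -⟩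
      linarith
    rw [hset, setIntegral_union hdisj measurableSet_Icc hint_l hint_r]
    have hl : (∫ t in Icc (x - π) (x - δ), f t / (2 * Real.tan ((t - x) / 2)))
        = ∫ u in δ..π, f (x - u) / (2 * Real.tan ((x - u - x) / 2)) := by
      rw [intervalIntegral.integral_comp_sub_left
        (fun t => f t / (2 * Real.tan ((t - x) / 2))) x]
      rw [integral_Icc_eq_integral_Ioc,
        intervalIntegral.integral_of_le (by linarith : x - π ≤ x - δ)]
    have hr : (∫ t in Icc (x + δ) (x + π), f t / (2 * Real.tan ((t - x) / 2)))
        = ∫ u in δ..π, f (u + x) / (2 * Real.tan ((u + x - x) / 2)) := by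
      rw [intervalIntegral.integral_comp_add_right
        (fun t => f t / (2 * Real.tan ((t - x) / 2))) x]
      rw [show δ + x = x + δ by ring, show π + x = x + π by ring]
      rw [integral_Icc_eq_integral_Ioc,
        intervalIntegral.integral_of_le (by linarith : x + δ ≤ x + π)]
    have hIl : IntervalIntegrable (fun u => f (x - u) / (2 * Real.tan ((x - u - x) / 2)))
        volume δ π := by
      rw [intervalIntegrable_iff_integrableOn_Ioc_of_le hδπ.le]
      apply Measure.integrableOn_of_bounded (M := M / δ) (measure_Ioc_lt_top).ne
        (hgmeas.comp (measurable_const.sub measurable_id)).aestronglyMeasurable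
      rw [ae_restrict_iff' measurableSet_Ioc]
      refine Eventually.of_forall fun u hu => ?_
      have h0 : x - u - x = -u := by ring
      have h1 : |(-u : ℝ)| = u := by rw [abs_neg, abs_of_pos (hδ0.trans hu.1)]
      have := hgb (x - u) (by rw [show x - u - x = -u by ring, h1]; exact hu.1.le)
        (by rw [show x - u - x = -u by ring, h1]; exact hu.2)
      simpa using this
    have hIr : IntervalIntegrable (fun u => f (u + x) / (2 * Real.tan ((u + x - x) / 2)))
        volume δ π := by
      rw [intervalIntegrable_iff_integrableOn_Ioc_of_le hδπ.le]
      apply Measure.integrableOn_of_bounded (M := M / δ) (measure_Ioc_lt_top).ne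
        (hgmeas.comp (measurable_id.add_const x)).aestronglyMeasurable
      rw [ae_restrict_iff' measurableSet_Ioc]
      refine Eventually.of_forall fun u hu => ?_
      have h1 : |u| = u := abs_of_pos (hδ0.trans hu.1)
      have := hgb (u + x) (by rw [show u + x - x = u by ring, h1]; exact hu.1.le)
        (by rw [show u + x - x = u by ring, h1]; exact hu.2)
      simpa using this
    rw [hl, hr, ← intervalIntegral.integral_add hIl hIr,
      intervalIntegral.integral_of_le hδπ.le]
    apply setIntegral_congr_fun measurableSet_Ioc
    intro u hu
    simp only [hφ_def]
    rw [show x - u - x = -u by ring, show u + x - x = u by ring,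
      show u + x = x + u by ring, neg_div, Real.tan_neg, mul_neg, div_neg, sub_div]
    ring
  -- the limit
  set G : ℝ → ℝ := fun δ => ∫ u in Ioc 0 δ, ψ u with hG_def
  have hGseq : Tendsto (fun n : ℕ => G (π / (n + 1))) atTop (𝓝 0) := by
    have hmem : ∀ n : ℕ, π / ((n : ℝ) + 1) ≤ π :=
      fun n => div_le_self hπ.le (le_add_of_nonneg_left (Nat.cast_nonneg n))
    have h0 := tendsto_setIntegral_of_antitone (μ := volume) (f := ψ)
      (s := fun n : ℕ => Ioc (0:ℝ) (π / (n + 1)))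
      (fun n => measurableSet_Ioc)
      (fun n m hnm => Ioc_subset_Ioc_right (by
        have hcast := (Nat.cast_le (α := ℝ)).2 hnm
        gcongr <;> linarith))
      ⟨0, hψint.mono_set (Ioc_subset_Ioc_right (hmem 0))⟩
    have hI : ⋂ n : ℕ, Ioc (0:ℝ) (π / (n + 1)) = ∅ := by
      ext u
      simp only [mem_iInter, mem_Ioc, mem_empty_iff_false, iff_false, not_forall]
      by_contra hcon
      push_neg at hcon
      have hu : 0 < u := (hcon 0).1
      obtain ⟨n, hn⟩ := exists_nat_gt (π / u)
      have h2 : π / ((n : ℝ) + 1) < u := by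
        rw [div_lt_iff₀ (by positivity)]
        calc π = π / u * u := (div_mul_cancel₀ π hu.ne').symm
          _ < ((n:ℝ) + 1) * u := by
              refine mul_lt_mul_of_pos_right ?_ hu
              linarith
          _ = u * ((n:ℝ) + 1) := by ring
      exact absurd (hcon n).2 (not_le.2 h2)
    rwa [hI, setIntegral_empty] at h0
  have hGz : Tendsto G (𝓝[>] (0:ℝ)) (𝓝 0) := by
    rw [Metric.tendsto_nhdsWithin_nhds]
    intro e he
    obtain ⟨n, hn⟩ := (hGseq.eventually_lt_const he).exists
    have hd0 : (0:ℝ) < π / (n + 1) := by positivity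
    have hdπ : π / ((n : ℝ) + 1) ≤ π :=
      div_le_self hπ.le (le_add_of_nonneg_left (Nat.cast_nonneg n))
    refine ⟨π / (n + 1), hd0, fun {δ} hδ hdist => ?_⟩
    have hδ0 : (0:ℝ) < δ := hδ
    rw [Real.dist_eq, sub_zero, abs_of_pos hδ0] at hdist
    rw [Real.dist_eq, sub_zero]
    have hδπ : δ ≤ π := le_trans hdist.le hdπ
    have hG_nonneg : 0 ≤ G δ :=
      setIntegral_nonneg measurableSet_Ioc (fun u hu => hψnn u ⟨hu.1, hu.2.trans hδπ⟩)
    rw [abs_of_nonneg hG_nonneg]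
    have hmono : G δ ≤ G (π / (n + 1)) := by
      apply setIntegral_mono_set (hψint.mono_set (Ioc_subset_Ioc_right hdπ))
        ((ae_restrict_iff' measurableSet_Ioc).2 (Eventually.of_forall
          (fun u hu => hψnn u ⟨hu.1, hu.2.trans hdπ⟩)))
        ((Ioc_subset_Ioc_right hdist.le).eventuallyLE)
    linarith
  have hz : Tendsto (fun δ => ∫ u in Ioc 0 δ, φ u) (𝓝[>] (0:ℝ)) (𝓝 0) := by
    apply squeeze_zero_norm' ?_ hGz
    filter_upwards [Ioo_mem_nhdsGT_of_mem (⟨le_refl (0:ℝ), hπ⟩ : (0:ℝ) ∈ Ico 0 π)]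
      with δ hδ
    calc ‖∫ u in Ioc 0 δ, φ u‖ ≤ ∫ u in Ioc 0 δ, ‖φ u‖ := norm_integral_le_integral_norm _
      _ ≤ ∫ u in Ioc 0 δ, ψ u := by
          apply setIntegral_mono_on ((show IntegrableOn (fun u => ‖φ u‖) (Ioc 0 π) volume
              from hφint.norm).mono_set (Ioc_subset_Ioc_right hδ.2.le))
            (hψint.mono_set (Ioc_subset_Ioc_right hδ.2.le)) measurableSet_Ioc
          intro u hu
          exact hφψ u ⟨hu.1, hu.2.trans hδ.2.le⟩
      _ = G δ := rfl
  have hmain : Tendsto (fun δ => ∫ u in Ioc δ π, φ u) (𝓝[>] (0:ℝ))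
      (𝓝 (∫ u in Ioc 0 π, φ u)) := by
    have h1 : Tendsto (fun δ => (∫ u in Ioc 0 π, φ u) - ∫ u in Ioc 0 δ, φ u)
        (𝓝[>] (0:ℝ)) (𝓝 (∫ u in Ioc 0 π, φ u)) := by
      simpa using tendsto_const_nhds.sub hz
    apply h1.congr'
    filter_upwards [Ioo_mem_nhdsGT_of_mem (⟨le_refl (0:ℝ), hπ⟩ : (0:ℝ) ∈ Ico 0 π)]
      with δ hδ
    rw [show (Ioc (0:ℝ) π) = Ioc 0 δ ∪ Ioc δ π from (Ioc_union_Ioc_eq_Ioc hδ.1.le hδ.2.le).symm,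
      setIntegral_union (Set.Ioc_disjoint_Ioc_of_le le_rfl) measurableSet_Ioc
        (hφint.mono_set (Ioc_subset_Ioc_right hδ.2.le))
        (hφint.mono_set (Ioc_subset_Ioc_left hδ.1.le))]
    ring
  refine ⟨-(1/π) * ∫ u in Ioc 0 π, φ u, ?_⟩
  unfold ConjAt
  apply (hmain.const_mul (-(1/π))).congr'
  filter_upwards [Ioo_mem_nhdsGT_of_mem (⟨le_refl (0:ℝ), hπ⟩ : (0:ℝ) ∈ Ico 0 π)]
    with δ hδ
  rw [key δ hδ]
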